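/- Diffusion matrix lower bound. Given constants 0 < m₀ < M₀ and E₀, H₀ > 0, there exist δ̄ ∈ (0,1) and c₀, R₀ > 0, depending only on m₀, M₀, E₀, H₀, with the following property: for every function k : (0,∞) → (0,∞) that is nondecreasing and such that r ↦ k(r)/r is nonincreasing, every measurable f : ℝ³ → [0,∞) with m₀ ≤ ∫_{ℝ³} f(v) dv ≤ M₀, ∫_{ℝ³} f(v)|v|² dv ≤ E₀, f ln f integrable and ∫_{ℝ³} f(v) ln f(v) dv ≤ H₀, every δ ∈ (0, δ̄], every v ∈ ℝ³ and every unit vector e ∈ ℝ³, one has ∫_{{z : |z| ≥ δ}} (k(|z|)/|z|) (1 − ((e·z)/|z|)²) f(v+z) dz ≥ c₀ k(|v| + R₀)/(1+|v|)³. -/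

import Mathlib

open MeasureTheory Set Real
open scoped ENNReal

noncomputable section

lemma aux_entropy (x a : ℝ) (hx : 0 ≤ x) :
    -(x * Real.log x) ≤ x * a + Real.exp (-a - 1) := by
  rcases eq_or_lt_of_le hx with h | hxpos
  · simp only [← h, zero_mul, neg_zero, zero_add]
    positivity
  · have h3 : 1 - Real.exp (-a - 1) / x ≤ Real.log x + (a + 1) := by
      have h1 : Real.log ((x * Real.exp (a + 1))⁻¹) ≤ (x * Real.exp (a + 1))⁻¹ - 1 :=
        Real.log_le_sub_one_of_pos (by positivity)
      rw [Real.log_inv, Real.log_mul (ne_of_gt hxpos) (Real.exp_ne_zero _), Real.log_exp] at h1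
      have hinv : (x * Real.exp (a + 1))⁻¹ = Real.exp (-a - 1) / x := by
        rw [mul_inv, ← Real.exp_neg, neg_add']
        ring
      rw [hinv] at h1
      linarith
    have h4 := mul_le_mul_of_nonneg_left h3 hxpos.le
    have h5 : x * (Real.exp (-a - 1) / x) = Real.exp (-a - 1) := by field_simp
    nlinarith [h4, h5]

lemma aux_coord (x : EuclideanSpace ℝ (Fin 3)) (i : Fin 3) : |x i| ≤ ‖x‖ := by
  rw [EuclideanSpace.norm_eq]
  rw [Real.le_sqrt (abs_nonneg _) (Finset.sum_nonneg fun j _ => sq_nonneg _)]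
  have h := Finset.single_le_sum (f := fun j => ‖x j‖ ^ 2) (fun j _ => sq_nonneg _)
    (Finset.mem_univ i)
  simpa [Real.norm_eq_abs, sq_abs] using h

lemma aux_normsq (x : EuclideanSpace ℝ (Fin 3)) :
    ‖x‖ ^ 2 = (x 0) ^ 2 + (x 1) ^ 2 + (x 2) ^ 2 := by
  rw [EuclideanSpace.norm_eq, Real.sq_sqrt (Finset.sum_nonneg fun i _ => sq_nonneg _)]
  simp [Fin.sum_univ_three, Real.norm_eq_abs, sq_abs]

lemma aux_basis (e : EuclideanSpace ℝ (Fin 3)) (he : ‖e‖ = 1) :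
    ∃ b : OrthonormalBasis (Fin 3) ℝ (EuclideanSpace ℝ (Fin 3)), b 0 = e := by
  have hcard : Module.finrank ℝ (EuclideanSpace ℝ (Fin 3)) = Fintype.card (Fin 3) := by
    simp [finrank_euclideanSpace_fin]
  have horth : Orthonormal ℝ (({0} : Set (Fin 3)).restrict (fun _ => e)) := by
    refine ⟨fun i => by exact he, fun i j hij => ?_⟩
    exfalso
    apply hij
    have hi := i.2
    have hj := j.2
    simp only [Set.mem_singleton_iff] at hi hj
    exact Subtype.ext (hi.trans hj.symm)
  obtain ⟨b, hb⟩ := horth.exists_orthonormalBasis_extension_of_card_eq hcard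
  exact ⟨b, hb 0 rfl⟩

lemma aux_box (b : OrthonormalBasis (Fin 3) ℝ (EuclideanSpace ℝ (Fin 3)))
    (a c : Fin 3 → ℝ) (B : Set (EuclideanSpace ℝ (Fin 3)))
    (h : ∀ z ∈ B, ∀ i, b.repr z i ∈ Icc (a i) (c i)) :
    volume B ≤ ∏ i, ENNReal.ofReal (c i - a i) := by
  set box : Set (EuclideanSpace ℝ (Fin 3)) := {x | ∀ i, x i ∈ Icc (a i) (c i)} with hbox
  have hsub : B ⊆ b.repr ⁻¹' box := fun z hz => h z hz
  have hpim : MeasurableSet (Set.univ.pi fun i => Icc (a i) (c i)) :=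
    MeasurableSet.univ_pi fun i => measurableSet_Icc
  have hboxeq : box = (MeasurableEquiv.toLp 2 (Fin 3 → ℝ)).symm ⁻¹'
      (Set.univ.pi fun i => Icc (a i) (c i)) := by
    ext x
    simp only [hbox, Set.mem_preimage, Set.mem_univ_pi, Set.mem_setOf_eq, Set.mem_Icc]
    exact ⟨fun h i => h i, fun h i => h i⟩
  calc volume B ≤ volume (b.repr ⁻¹' box) := measure_mono hsub
    _ = volume box := by
        apply b.measurePreserving_repr.measure_preimage
        rw [hboxeq]
        exact (((MeasurableEquiv.toLp 2 (Fin 3 → ℝ)).symm.measurable hpim)).nullMeasurableSet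
    _ = volume (Set.univ.pi fun i => Icc (a i) (c i)) := by
        rw [hboxeq]
        exact (EuclideanSpace.volume_preserving_symm_measurableEquiv_toLp (Fin 3)).measure_preimage
          hpim.nullMeasurableSet
    _ = ∏ i, volume (Icc (a i) (c i)) := volume_pi_pi _
    _ = ∏ i, ENNReal.ofReal (c i - a i) := by simp [Real.volume_Icc]

lemma aux_gauss_eq : (fun w : EuclideanSpace ℝ (Fin 3) => Real.exp (-‖w‖ ^ 2 - 1))
    = fun w => Real.exp (-1) * Real.exp (-(1 : ℝ) * ‖w‖ ^ 2) := by
  funext w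
  rw [← Real.exp_add]
  ring_nf

lemma aux_gauss_int0 : Integrable (fun w : EuclideanSpace ℝ (Fin 3) =>
    Real.exp (-(1 : ℝ) * ‖w‖ ^ 2)) := by
  have h2 := (GaussianFourier.integrable_cexp_neg_mul_sq_norm_add (V := EuclideanSpace ℝ (Fin 3))
    (b := (1 : ℂ)) (by norm_num) 0 0).norm
  convert h2 using 2 with w
  simp [Complex.norm_exp, ← Complex.ofReal_pow]

lemma aux_gauss_int : Integrable (fun w : EuclideanSpace ℝ (Fin 3) =>
    Real.exp (-‖w‖ ^ 2 - 1)) := by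
  rw [aux_gauss_eq]
  exact aux_gauss_int0.const_mul _

lemma aux_gauss_val : ∫ w : EuclideanSpace ℝ (Fin 3), Real.exp (-‖w‖ ^ 2 - 1) ≤ 8 := by
  rw [aux_gauss_eq]
  rw [integral_const_mul, GaussianFourier.integral_rexp_neg_mul_sq_norm one_pos]
  have hrank : (Module.finrank ℝ (EuclideanSpace ℝ (Fin 3)) : ℝ) = 3 := by
    simp [finrank_euclideanSpace_fin]
  rw [hrank, div_one]
  have hpi : (π : ℝ) ^ ((3 : ℝ) / 2) ≤ 8 := by
    calc (π : ℝ) ^ ((3 : ℝ) / 2) ≤ 4 ^ ((3 : ℝ) / 2) :=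
          Real.rpow_le_rpow Real.pi_pos.le Real.pi_le_four (by norm_num)
      _ = 8 := by
          rw [show (4 : ℝ) = 2 ^ (2 : ℝ) by
              rw [show (2 : ℝ) = ((2 : ℕ) : ℝ) by norm_num, Real.rpow_natCast]; norm_num,
            ← Real.rpow_mul (by norm_num)]
          norm_num
  have hexp : Real.exp (-1 : ℝ) ≤ 1 := Real.exp_le_one_iff.mpr (by norm_num)
  have hnn : (0:ℝ) ≤ π ^ ((3 : ℝ) / 2) := Real.rpow_nonneg Real.pi_pos.le _
  nlinarith [Real.exp_pos (-1 : ℝ)]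

set_option maxHeartbeats 1000000

/-- Diffusion matrix lower bound: the long-range part of the Landau
diffusion matrix is bounded below, as a quadratic form, by
`c₀ k(|v|+R₀)(1+|v|)⁻³` times the identity, with constants depending only on the
hydrodynamic bounds `m₀, M₀, E₀, H₀`. -/
theorem diffusion_matrix_lower_bound
    (m₀ M₀ E₀ H₀ : ℝ) (hm₀ : 0 < m₀) (hmM : m₀ < M₀) (hE₀ : 0 < E₀) (hH₀ : 0 < H₀) :
    ∃ δbar c₀ R₀ : ℝ, δbar ∈ Set.Ioo (0 : ℝ) 1 ∧ 0 < c₀ ∧ 0 < R₀ ∧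
      ∀ k : ℝ → ℝ,
        (∀ r, 0 < r → 0 < k r) →
        MonotoneOn k (Set.Ioi 0) →
        AntitoneOn (fun r => k r / r) (Set.Ioi 0) →
      ∀ f : EuclideanSpace ℝ (Fin 3) → ℝ,
        Measurable f → (∀ v, 0 ≤ f v) →
        Integrable f →
        m₀ ≤ ∫ v, f v → (∫ v, f v) ≤ M₀ →
        Integrable (fun v => f v * ‖v‖ ^ 2) →
        (∫ v, f v * ‖v‖ ^ 2) ≤ E₀ →
        Integrable (fun v => f v * Real.log (f v)) →
        (∫ v, f v * Real.log (f v)) ≤ H₀ →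
      ∀ δ, δ ∈ Set.Ioc (0 : ℝ) δbar →
      ∀ v e : EuclideanSpace ℝ (Fin 3), ‖e‖ = 1 →
        ENNReal.ofReal (c₀ * k (‖v‖ + R₀) / (1 + ‖v‖) ^ 3) ≤
          ∫⁻ z in {z : EuclideanSpace ℝ (Fin 3) | δ ≤ ‖z‖},
            ENNReal.ofReal
              (k ‖z‖ / ‖z‖ * (1 - ((inner ℝ e z : ℝ) / ‖z‖) ^ 2) * f (v + z)) := by
  classical
  obtain ⟨R₀, hR₀def⟩ : ∃ x : ℝ, x = max 1 (Real.sqrt (4 * E₀ / m₀)) := ⟨_, rfl⟩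
  have hR₀1 : 1 ≤ R₀ := hR₀def ▸ le_max_left _ _
  have hR₀pos : 0 < R₀ := lt_of_lt_of_le one_pos hR₀1
  have hR₀E : E₀ ≤ R₀ ^ 2 * (m₀ / 4) := by
    have h1 : Real.sqrt (4 * E₀ / m₀) ≤ R₀ := hR₀def ▸ le_max_right _ _
    have h0 : (0:ℝ) ≤ 4 * E₀ / m₀ := by positivity
    have h2 : (4:ℝ) * E₀ / m₀ ≤ R₀ ^ 2 := by
      nlinarith [Real.sq_sqrt h0, Real.sqrt_nonneg (4 * E₀ / m₀)]
    rw [div_le_iff₀ hm₀] at h2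
    nlinarith
  obtain ⟨H₁, hH₁def⟩ : ∃ x : ℝ, x = H₀ + E₀ + 8 := ⟨_, rfl⟩
  have hH₁ : 0 < H₁ := by rw [hH₁def]; positivity
  obtain ⟨L, hLdef⟩ : ∃ x : ℝ, x = Real.exp (8 * H₁ / m₀) := ⟨_, rfl⟩
  have hLpos : 0 < L := hLdef ▸ Real.exp_pos _
  have hlogL : Real.log L = 8 * H₁ / m₀ := by rw [hLdef, Real.log_exp]
  obtain ⟨ρsq, hρdef⟩ : ∃ x : ℝ, x = m₀ / (64 * L * R₀) := ⟨_, rfl⟩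
  have hρpos : 0 < ρsq := by rw [hρdef]; positivity
  obtain ⟨δbar, hδbardef⟩ : ∃ x : ℝ, x = min (1/2) (m₀ / (64 * L)) := ⟨_, rfl⟩
  have hδbarpos : 0 < δbar := by
    rw [hδbardef]; exact lt_min (by norm_num) (by positivity)
  obtain ⟨c₀, hc₀def⟩ : ∃ x : ℝ, x = ρsq * m₀ / (4 * R₀ ^ 3) := ⟨_, rfl⟩
  have hc₀pos : 0 < c₀ := by rw [hc₀def]; positivity
  refine ⟨δbar, c₀, R₀, ⟨hδbarpos, ?_⟩, hc₀pos, hR₀pos, ?_⟩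
  · rw [hδbardef]; exact lt_of_le_of_lt (min_le_left _ _) (by norm_num)
  intro k hk hkmono hkanti f hfm hfnn hfint hm_le hle_M hfE_int hfE hfH_int hfH δ hδ v e he
  obtain ⟨hδ0, hδbar⟩ := hδ
  have hδ1 : δ ≤ 1 := by
    have h := hδbardef ▸ hδbar
    have h2 := min_le_left (1/2 : ℝ) (m₀ / (64 * L))
    linarith
  have hδm : δ ≤ m₀ / (64 * L) := by
    have h := hδbardef ▸ hδbar
    have h2 := min_le_right (1/2 : ℝ) (m₀ / (64 * L))
    linarith
  -- mass in the ball of radius R₀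
  have hball : MeasurableSet (Metric.ball (0 : EuclideanSpace ℝ (Fin 3)) R₀) :=
    measurableSet_ball
  have htail : ∫ w in (Metric.ball (0 : EuclideanSpace ℝ (Fin 3)) R₀)ᶜ, f w ≤ m₀ / 4 := by
    have h1 : (∫ w in (Metric.ball (0 : EuclideanSpace ℝ (Fin 3)) R₀)ᶜ, f w) * R₀ ^ 2 ≤
        ∫ w in (Metric.ball (0 : EuclideanSpace ℝ (Fin 3)) R₀)ᶜ, f w * ‖w‖ ^ 2 := by
      rw [← integral_mul_const]
      refine setIntegral_mono_on (hfint.integrableOn.mul_const _) hfE_int.integrableOn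
        hball.compl ?_
      intro w hw
      have hwR : R₀ ≤ ‖w‖ := by
        simp only [Set.mem_compl_iff, Metric.mem_ball, dist_zero_right, not_lt] at hw
        exact hw
      have h0 := hfnn w
      have h4 : R₀ ^ 2 ≤ ‖w‖ ^ 2 := by nlinarith [norm_nonneg w]
      exact mul_le_mul_of_nonneg_left h4 h0
    have h2 : ∫ w in (Metric.ball (0 : EuclideanSpace ℝ (Fin 3)) R₀)ᶜ, f w * ‖w‖ ^ 2 ≤ E₀ := by
      refine le_trans (setIntegral_le_integral hfE_int (ae_of_all _ fun w => ?_)) hfE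
      exact mul_nonneg (hfnn w) (sq_nonneg _)
    have h3 := le_trans h1 (le_trans h2 hR₀E)
    nlinarith [pow_pos hR₀pos 2]
  have hmass_ball : 3 / 4 * m₀ ≤ ∫ w in Metric.ball (0 : EuclideanSpace ℝ (Fin 3)) R₀, f w := by
    have h := integral_add_compl hball hfint
    linarith
  -- entropy truncation
  set A : Set (EuclideanSpace ℝ (Fin 3)) := {w | L ≤ f w} with hAdef
  have hAmeas : MeasurableSet A := measurableSet_le measurable_const hfm
  have hA_mass : ∫ w in A, f w ≤ m₀ / 8 := by
    have hgi : Integrable (fun w : EuclideanSpace ℝ (Fin 3) => Real.exp (-‖w‖ ^ 2 - 1)) :=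
      aux_gauss_int
    have hbound : Integrable (fun w : EuclideanSpace ℝ (Fin 3) =>
        f w * ‖w‖ ^ 2 + Real.exp (-‖w‖ ^ 2 - 1)) := hfE_int.add hgi
    have hcompl : -(E₀ + 8) ≤ ∫ w in Aᶜ, f w * Real.log (f w) := by
      have h1 : ∫ w in Aᶜ, -(f w * Real.log (f w)) ≤
          ∫ w in Aᶜ, (f w * ‖w‖ ^ 2 + Real.exp (-‖w‖ ^ 2 - 1)) := by
        refine setIntegral_mono_on hfH_int.neg.integrableOn hbound.integrableOn hAmeas.compl ?_
        intro w _
        have h := aux_entropy (f w) (‖w‖ ^ 2) (hfnn w)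
        have hexp : Real.exp (-(‖w‖ ^ 2) - 1) = Real.exp (-‖w‖ ^ 2 - 1) := by ring_nf
        linarith [h, hexp.le, hexp.ge]
      have h2 : ∫ w in Aᶜ, (f w * ‖w‖ ^ 2 + Real.exp (-‖w‖ ^ 2 - 1)) ≤ E₀ + 8 := by
        have h3 : ∫ w in Aᶜ, (f w * ‖w‖ ^ 2 + Real.exp (-‖w‖ ^ 2 - 1)) ≤
            ∫ w, (f w * ‖w‖ ^ 2 + Real.exp (-‖w‖ ^ 2 - 1)) :=
          setIntegral_le_integral hbound (ae_of_all _ fun w =>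
            add_nonneg (mul_nonneg (hfnn w) (sq_nonneg _)) (Real.exp_pos _).le)
        have h4 := integral_add hfE_int hgi
        have h5 := aux_gauss_val
        rw [h4] at h3
        exact le_trans h3 (by linarith)
      rw [integral_neg] at h1
      linarith
    have hA_ent : ∫ w in A, f w * Real.log (f w) ≤ H₁ := by
      have h := integral_add_compl hAmeas hfH_int
      rw [hH₁def]
      linarith
    have hch : Real.log L * ∫ w in A, f w ≤ ∫ w in A, f w * Real.log (f w) := by
      rw [← integral_const_mul]
      refine setIntegral_mono_on (hfint.integrableOn.const_mul _) hfH_int.integrableOn hAmeas ?_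
      intro w hw
      have hwL : L ≤ f w := hw
      have hlog : Real.log L ≤ Real.log (f w) := Real.log_le_log hLpos hwL
      calc Real.log L * f w = f w * Real.log L := mul_comm _ _
        _ ≤ f w * Real.log (f w) := mul_le_mul_of_nonneg_left hlog (hfnn w)
    have hX0 : 0 ≤ ∫ w in A, f w := setIntegral_nonneg hAmeas fun w _ => hfnn w
    have hfin : 8 * H₁ / m₀ * ∫ w in A, f w ≤ H₁ := by
      rw [← hlogL]; exact le_trans hch hA_ent
    rw [div_mul_eq_mul_div, div_le_iff₀ hm₀] at hfin
    have h8 : (8 * H₁) * (∫ w in A, f w) ≤ (8 * H₁) * (m₀ / 8) := by nlinarith [hfin]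
    exact le_of_mul_le_mul_left h8 (by positivity)
  -- pass to lintegrals
  set F : EuclideanSpace ℝ (Fin 3) → ℝ≥0∞ := fun w => ENNReal.ofReal (f w) with hFdef
  have hFmeas : Measurable F := ENNReal.measurable_ofReal.comp hfm
  have hball_lint : ENNReal.ofReal (3 / 4 * m₀) ≤
      ∫⁻ w in Metric.ball (0 : EuclideanSpace ℝ (Fin 3)) R₀, F w := by
    rw [hFdef, ← ofReal_integral_eq_lintegral_ofReal hfint.integrableOn (ae_of_all _ hfnn)]
    exact ENNReal.ofReal_le_ofReal hmass_ball
  have hA_lint : ∫⁻ w in A, F w ≤ ENNReal.ofReal (m₀ / 8) := by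
    rw [hFdef, ← ofReal_integral_eq_lintegral_ofReal hfint.integrableOn (ae_of_all _ hfnn)]
    exact ENNReal.ofReal_le_ofReal hA_mass
  -- geometry
  obtain ⟨b, hb0⟩ := aux_basis e he
  set T : EuclideanSpace ℝ (Fin 3) → EuclideanSpace ℝ (Fin 3) := fun z => v + z with hTdef
  have hT : MeasurePreserving T volume volume := measurePreserving_add_left volume v
  have hTemb : MeasurableEmbedding T := (MeasurableEquiv.addLeft v).measurableEmbedding
  have htrans : ∀ s : Set (EuclideanSpace ℝ (Fin 3)),
      ∫⁻ z in T ⁻¹' s, F (T z) = ∫⁻ w in s, F w :=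
    fun s => hT.setLIntegral_comp_preimage_emb hTemb F s
  set ball0 : Set (EuclideanSpace ℝ (Fin 3)) := {z | ‖z‖ < δ} with hball0def
  set tube : Set (EuclideanSpace ℝ (Fin 3)) :=
    {z | ‖z‖ ^ 2 - ρsq ≤ (inner ℝ e z : ℝ) ^ 2} with htubedef
  set Av : Set (EuclideanSpace ℝ (Fin 3)) :=
    T ⁻¹' Metric.ball (0 : EuclideanSpace ℝ (Fin 3)) R₀ with hAvdef
  have hAv : ∀ z, z ∈ Av ↔ ‖v + z‖ < R₀ := by
    intro z
    rw [hAvdef, Set.mem_preimage, mem_ball_zero_iff]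
  have hball0_meas : MeasurableSet ball0 := measurableSet_lt measurable_norm measurable_const
  have hcont_inner : Continuous fun z : EuclideanSpace ℝ (Fin 3) => (inner ℝ e z : ℝ) :=
    continuous_const.inner continuous_id
  have htube_meas : MeasurableSet tube :=
    (isClosed_le ((continuous_norm.pow 2).sub continuous_const) (hcont_inner.pow 2)).measurableSet
  have hAv_meas : MeasurableSet Av := hT.measurable measurableSet_ball
  set S : Set (EuclideanSpace ℝ (Fin 3)) := Av \ (ball0 ∪ tube) with hSdef
  have hS_meas : MeasurableSet S := hAv_meas.diff (hball0_meas.union htube_meas)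
  -- volume bounds for the bad sets
  have hvol1 : volume ball0 ≤ ENNReal.ofReal (m₀ / (8 * L)) := by
    have hbox := aux_box b (fun _ => -δ) (fun _ => δ) ball0 ?_
    · refine le_trans hbox ?_
      have : ∏ _i : Fin 3, ENNReal.ofReal (δ - -δ) = ENNReal.ofReal (2 * δ) ^ 3 := by
        rw [Finset.prod_const]
        rw [Finset.card_univ, Fintype.card_fin, show δ - -δ = 2 * δ by ring]
      rw [this, ← ENNReal.ofReal_pow (by linarith)]
      refine ENNReal.ofReal_le_ofReal ?_
      have hδ3 : δ ^ 3 ≤ δ := by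
        nlinarith [mul_nonneg (mul_nonneg hδ0.le (sub_nonneg.mpr hδ1))
          (by linarith : (0:ℝ) ≤ 1 + δ)]
      have heq : m₀ / (8 * L) = 8 * (m₀ / (64 * L)) := by
        field_simp
        ring
      calc (2 * δ) ^ 3 = 8 * δ ^ 3 := by ring
        _ ≤ 8 * δ := by linarith
        _ ≤ 8 * (m₀ / (64 * L)) := by linarith
        _ = m₀ / (8 * L) := heq.symm
    · intro z hz i
      have h1 : |b.repr z i| ≤ ‖z‖ := by
        have h2 := aux_coord (b.repr z) i
        rwa [b.repr.norm_map] at h2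
      have h2 : ‖z‖ ≤ δ := le_of_lt hz
      have h3 := abs_le.mp (le_trans h1 h2)
      exact ⟨h3.1, h3.2⟩
  have hvol2 : volume (tube ∩ Av) ≤ ENNReal.ofReal (m₀ / (8 * L)) := by
    obtain ⟨ρ, hρ'⟩ : ∃ x : ℝ, x = Real.sqrt ρsq := ⟨_, rfl⟩
    have hρsq : ρ ^ 2 = ρsq := by rw [hρ']; exact Real.sq_sqrt hρpos.le
    have hρnn : 0 ≤ ρ := hρ' ▸ Real.sqrt_nonneg _
    have hbox := aux_box b ![-(inner ℝ e v : ℝ) - R₀, -ρ, -ρ] ![-(inner ℝ e v : ℝ) + R₀, ρ, ρ]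
      (tube ∩ Av) ?_
    · refine le_trans hbox (le_of_eq ?_)
      rw [Fin.prod_univ_three]
      show ENNReal.ofReal (-(inner ℝ e v : ℝ) + R₀ - (-(inner ℝ e v : ℝ) - R₀)) *
          ENNReal.ofReal (ρ - -ρ) * ENNReal.ofReal (ρ - -ρ) = _
      rw [show -(inner ℝ e v : ℝ) + R₀ - (-(inner ℝ e v : ℝ) - R₀) = 2 * R₀ by ring,
        show ρ - -ρ = 2 * ρ by ring,
        ← ENNReal.ofReal_mul (by linarith), ← ENNReal.ofReal_mul (by positivity)]
      congr 1
      have h8 : 2 * R₀ * (2 * ρ) * (2 * ρ) = 8 * R₀ * ρsq := by rw [← hρsq]; ring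
      rw [h8, hρdef]
      field_simp
      ring
    · rintro z ⟨hzt, hzA⟩
      have hx0 : b.repr z 0 = (inner ℝ e z : ℝ) := by
        rw [b.repr_apply_apply, hb0]
      have hnormz : ‖z‖ ^ 2 = (b.repr z 0) ^ 2 + (b.repr z 1) ^ 2 + (b.repr z 2) ^ 2 := by
        rw [← b.repr.norm_map z]
        exact aux_normsq _
      have htrans2 : (b.repr z 1) ^ 2 + (b.repr z 2) ^ 2 ≤ ρsq := by
        have h : ‖z‖ ^ 2 - ρsq ≤ (inner ℝ e z : ℝ) ^ 2 := hzt
        rw [hnormz, ← hx0] at h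
        linarith
      have habs : ∀ j : Fin 3, (b.repr z j) ^ 2 ≤ ρsq → |b.repr z j| ≤ ρ := by
        intro j hj
        rw [hρ', ← Real.sqrt_sq_eq_abs]
        exact Real.sqrt_le_sqrt hj
      have h0mem : b.repr z 0 ∈ Icc (-(inner ℝ e v : ℝ) - R₀) (-(inner ℝ e v : ℝ) + R₀) := by
        have hvz : |(inner ℝ e (v + z) : ℝ)| ≤ R₀ := by
          have h1 : |(inner ℝ e (v + z) : ℝ)| ≤ ‖e‖ * ‖v + z‖ := abs_real_inner_le_norm _ _
          rw [he, one_mul] at h1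
          exact le_trans h1 ((hAv z).mp hzA).le
        rw [inner_add_right] at hvz
        have h := abs_le.mp hvz
        rw [Set.mem_Icc, hx0]
        constructor <;> linarith [h.1, h.2]
      have h1mem : b.repr z 1 ∈ Icc (-ρ) ρ := by
        have h := abs_le.mp (habs 1 (by nlinarith [sq_nonneg (b.repr z 2)]))
        exact ⟨h.1, h.2⟩
      have h2mem : b.repr z 2 ∈ Icc (-ρ) ρ := by
        have h := abs_le.mp (habs 2 (by nlinarith [sq_nonneg (b.repr z 1)]))
        exact ⟨h.1, h.2⟩
      intro i
      fin_cases i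
      · exact h0mem
      · exact h1mem
      · exact h2mem
  -- bound for integral of f ∘ T on small-volume sets
  have hbad : ∀ P : Set (EuclideanSpace ℝ (Fin 3)), MeasurableSet P →
      volume P ≤ ENNReal.ofReal (m₀ / (8 * L)) →
      ∫⁻ z in P, F (T z) ≤ ENNReal.ofReal (m₀ / 4) := by
    intro P hPm hPv
    have hsplit : P ⊆ (P ∩ {z | f (T z) ≤ L}) ∪ T ⁻¹' A := by
      intro z hz
      by_cases hc : f (T z) ≤ L
      · exact Or.inl ⟨hz, hc⟩
      · exact Or.inr (le_of_not_ge hc)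
    calc ∫⁻ z in P, F (T z)
        ≤ ∫⁻ z in (P ∩ {z | f (T z) ≤ L}) ∪ T ⁻¹' A, F (T z) := lintegral_mono_set hsplit
      _ ≤ (∫⁻ z in P ∩ {z | f (T z) ≤ L}, F (T z)) + ∫⁻ z in T ⁻¹' A, F (T z) :=
          lintegral_union_le _ _ _
      _ ≤ ENNReal.ofReal L * volume P + ENNReal.ofReal (m₀ / 8) := by
          refine add_le_add ?_ ?_
          · calc ∫⁻ z in P ∩ {z | f (T z) ≤ L}, F (T z)
                ≤ ∫⁻ _z in P ∩ {z | f (T z) ≤ L}, ENNReal.ofReal L :=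
                  setLIntegral_mono measurable_const fun z hz => ENNReal.ofReal_le_ofReal hz.2
              _ = ENNReal.ofReal L * volume (P ∩ {z | f (T z) ≤ L}) := setLIntegral_const _ _
              _ ≤ ENNReal.ofReal L * volume P :=
                  mul_le_mul_right (measure_mono inter_subset_left) _
          · rw [htrans A]
            exact hA_lint
      _ ≤ ENNReal.ofReal L * ENNReal.ofReal (m₀ / (8 * L)) + ENNReal.ofReal (m₀ / 8) := by
          exact add_le_add (mul_le_mul_right hPv _) le_rfl
      _ = ENNReal.ofReal (m₀ / 4) := by
          rw [← ENNReal.ofReal_mul hLpos.le, ← ENNReal.ofReal_add (by positivity) (by positivity)]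
          congr 1
          field_simp
          ring
  -- mass on the good set
  have hSmass : ENNReal.ofReal (m₀ / 4) ≤ ∫⁻ z in S, F (T z) := by
    have hAsub : Av ⊆ S ∪ (ball0 ∪ tube ∩ Av) := by
      intro z hz
      by_cases hc : z ∈ ball0 ∪ tube
      · rcases hc with hc | hc
        · exact Or.inr (Or.inl hc)
        · exact Or.inr (Or.inr ⟨hc, hz⟩)
      · exact Or.inl ⟨hz, hc⟩
    have h1 : ∫⁻ z in Av, F (T z) ≤
        (∫⁻ z in S, F (T z)) + (ENNReal.ofReal (m₀ / 4) + ENNReal.ofReal (m₀ / 4)) := by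
      calc ∫⁻ z in Av, F (T z) ≤ ∫⁻ z in S ∪ (ball0 ∪ tube ∩ Av), F (T z) :=
            lintegral_mono_set hAsub
        _ ≤ (∫⁻ z in S, F (T z)) + ∫⁻ z in ball0 ∪ tube ∩ Av, F (T z) :=
            lintegral_union_le _ _ _
        _ ≤ (∫⁻ z in S, F (T z)) + ((∫⁻ z in ball0, F (T z)) + ∫⁻ z in tube ∩ Av, F (T z)) :=
            add_le_add le_rfl (lintegral_union_le _ _ _)
        _ ≤ _ := add_le_add le_rfl (add_le_add (hbad ball0 hball0_meas hvol1)
            (hbad _ (htube_meas.inter hAv_meas) hvol2))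
    have h2 : ENNReal.ofReal (3 / 4 * m₀) ≤ ∫⁻ z in Av, F (T z) := by
      rw [hAvdef, htrans (Metric.ball (0 : EuclideanSpace ℝ (Fin 3)) R₀)]
      exact hball_lint
    have h3 : ENNReal.ofReal (3 / 4 * m₀) ≤ (∫⁻ z in S, F (T z)) + ENNReal.ofReal (m₀ / 2) := by
      refine le_trans h2 (le_trans h1 (add_le_add le_rfl ?_))
      rw [← ENNReal.ofReal_add (by positivity) (by positivity)]
      exact ENNReal.ofReal_le_ofReal (by linarith)
    have h4 := tsub_le_iff_right.mpr h3
    rwa [← ENNReal.ofReal_sub _ (by positivity),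
      show (3 / 4 * m₀ - m₀ / 2 : ℝ) = m₀ / 4 by ring] at h4
  -- final assembly
  have hk0 : 0 < k (‖v‖ + R₀) := hk _ (by positivity)
  obtain ⟨clow, hclowdef⟩ : ∃ x : ℝ, x = ρsq / R₀ ^ 3 * k (‖v‖ + R₀) / (1 + ‖v‖) ^ 3 :=
    ⟨_, rfl⟩
  have hclow0 : 0 ≤ clow := by rw [hclowdef]; positivity
  have hpt : ∀ z ∈ S, ENNReal.ofReal clow * F (T z) ≤
      ENNReal.ofReal (k ‖z‖ / ‖z‖ * (1 - ((inner ℝ e z : ℝ) / ‖z‖) ^ 2) * f (v + z)) := by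
    intro z hz
    obtain ⟨hzA, hznot⟩ := hz
    rw [Set.mem_union] at hznot
    push_neg at hznot
    obtain ⟨hz1, hz2⟩ := hznot
    have hzδ : δ ≤ ‖z‖ := not_lt.mp hz1
    have hz0 : 0 < ‖z‖ := lt_of_lt_of_le hδ0 hzδ
    have hzup : ‖z‖ ≤ ‖v‖ + R₀ := by
      have hvz : ‖v + z‖ < R₀ := (hAv z).mp hzA
      have h1 : ‖z‖ = ‖v + z - v‖ := by rw [add_sub_cancel_left]
      rw [h1]
      calc ‖v + z - v‖ ≤ ‖v + z‖ + ‖v‖ := norm_sub_le _ _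
        _ ≤ ‖v‖ + R₀ := by linarith
    have htub : (inner ℝ e z : ℝ) ^ 2 < ‖z‖ ^ 2 - ρsq := by
      simp only [htubedef, Set.mem_setOf_eq, not_le] at hz2
      linarith
    have hang : ρsq / (R₀ ^ 2 * (1 + ‖v‖) ^ 2) ≤ 1 - ((inner ℝ e z : ℝ) / ‖z‖) ^ 2 := by
      have h1 : 1 - ((inner ℝ e z : ℝ) / ‖z‖) ^ 2 =
          (‖z‖ ^ 2 - (inner ℝ e z : ℝ) ^ 2) / ‖z‖ ^ 2 := by
        field_simp
      rw [h1]
      have h2 : ρsq ≤ ‖z‖ ^ 2 - (inner ℝ e z : ℝ) ^ 2 := by linarith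
      have h3a : ‖v‖ + R₀ ≤ R₀ * (1 + ‖v‖) := by nlinarith [norm_nonneg v, hR₀1]
      have h3 : ‖z‖ ^ 2 ≤ R₀ ^ 2 * (1 + ‖v‖) ^ 2 := by
        have := pow_le_pow_left₀ (norm_nonneg z) (hzup.trans h3a) 2
        rwa [mul_pow] at this
      rw [div_le_div_iff₀ (by positivity) (by positivity)]
      have e1 := mul_le_mul_of_nonneg_left h3 hρpos.le
      have e2 := mul_le_mul_of_nonneg_right h2 (by positivity :
        (0:ℝ) ≤ R₀ ^ 2 * (1 + ‖v‖) ^ 2)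
      linarith
    have hkz : k (‖v‖ + R₀) / (R₀ * (1 + ‖v‖)) ≤ k ‖z‖ / ‖z‖ := by
      have h1 : k (‖v‖ + R₀) / (‖v‖ + R₀) ≤ k ‖z‖ / ‖z‖ :=
        hkanti (Set.mem_Ioi.mpr hz0) (Set.mem_Ioi.mpr (by positivity)) hzup
      have h2 : k (‖v‖ + R₀) / (R₀ * (1 + ‖v‖)) ≤ k (‖v‖ + R₀) / (‖v‖ + R₀) := by
        apply div_le_div_of_nonneg_left hk0.le (by positivity)
        nlinarith [hR₀1, norm_nonneg v]
      linarith
    have hRHS : clow * f (v + z) ≤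
        k ‖z‖ / ‖z‖ * (1 - ((inner ℝ e z : ℝ) / ‖z‖) ^ 2) * f (v + z) := by
      refine mul_le_mul_of_nonneg_right ?_ (hfnn (v + z))
      have e2 : (0:ℝ) ≤ ρsq / (R₀ ^ 2 * (1 + ‖v‖) ^ 2) := by positivity
      calc clow = (k (‖v‖ + R₀) / (R₀ * (1 + ‖v‖))) * (ρsq / (R₀ ^ 2 * (1 + ‖v‖) ^ 2)) := by
            rw [hclowdef]
            field_simp
        _ ≤ (k ‖z‖ / ‖z‖) * (1 - ((inner ℝ e z : ℝ) / ‖z‖) ^ 2) :=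
            mul_le_mul hkz hang e2 (div_nonneg (hk _ hz0).le hz0.le)
    have hFTz : F (T z) = ENNReal.ofReal (f (v + z)) := rfl
    rw [hFTz, ← ENNReal.ofReal_mul hclow0]
    exact ENNReal.ofReal_le_ofReal hRHS
  have hSsub : S ⊆ {z : EuclideanSpace ℝ (Fin 3) | δ ≤ ‖z‖} := by
    intro z hz
    obtain ⟨_, hznot⟩ := hz
    rw [Set.mem_union] at hznot
    push_neg at hznot
    have h1 : ¬ ‖z‖ < δ := hznot.1
    exact not_lt.mp h1
  calc ENNReal.ofReal (c₀ * k (‖v‖ + R₀) / (1 + ‖v‖) ^ 3)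
      = ENNReal.ofReal clow * ENNReal.ofReal (m₀ / 4) := by
        rw [← ENNReal.ofReal_mul hclow0]
        congr 1
        rw [hclowdef, hc₀def]
        field_simp
    _ ≤ ENNReal.ofReal clow * ∫⁻ z in S, F (T z) := mul_le_mul_right hSmass _
    _ = ∫⁻ z in S, ENNReal.ofReal clow * F (T z) :=
        (lintegral_const_mul _ (hFmeas.comp (hT.measurable))).symm
    _ ≤ ∫⁻ z in S, ENNReal.ofReal
          (k ‖z‖ / ‖z‖ * (1 - ((inner ℝ e z : ℝ) / ‖z‖) ^ 2) * f (v + z)) :=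
        setLIntegral_mono' hS_meas hpt
    _ ≤ ∫⁻ z in {z : EuclideanSpace ℝ (Fin 3) | δ ≤ ‖z‖}, ENNReal.ofReal
          (k ‖z‖ / ‖z‖ * (1 - ((inner ℝ e z : ℝ) / ‖z‖) ^ 2) * f (v + z)) :=
        lintegral_mono_set hSsub
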